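/- arXiv:1911.11664 — 2 statements merged into one kernel-verified Lean document; each statement's English description precedes it below -/
import Mathlib

section
/- In the two-node model with design matrix C having rows (1, 1, iT/(M-1)), i = 0,...,M-1, and posterior information matrix J = Σ₀⁻¹ + σ⁻²CᵀC with Σ₀ = diag(σ_θ², σ_β², σ_α²), the (3,3) entry of J⁻¹ tends to 0 as M → ∞ (with T, σ, σ_θ, σ_β, σ_α fixed positive); that is, the skew parameter α is consistently estimated in the limit of infinitely many measurements. -/
open Matrix Filter

/-- Design matrix of the two-node sync-error model: row `i` is `(1, 1, i·T/(M−1))`. -/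
noncomputable def designC (M : ℕ) (T : ℝ) : Matrix (Fin M) (Fin 3) ℝ :=
  Matrix.of fun i j => ![1, 1, (i : ℝ) * T / ((M : ℝ) - 1)] j

/-- Posterior information matrix `J(M) = Σ₀⁻¹ + σ⁻²CᵀC`. -/
noncomputable def infoJ (M : ℕ) (T σ σθ σβ σα : ℝ) : Matrix (Fin 3) (Fin 3) ℝ :=
  (Matrix.diagonal ![σθ ^ 2, σβ ^ 2, σα ^ 2])⁻¹ +
    σ⁻¹ ^ 2 • ((designC M T)ᵀ * designC M T)

lemma sum_id_real (n : ℕ) : ∑ i : Fin n, (i : ℝ) = n * (n - 1) / 2 := by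
  induction n with
  | zero => simp
  | succ k ih =>
    rw [Fin.sum_univ_castSucc]
    push_cast
    push_cast at ih
    rw [show ∑ i : Fin k, ((Fin.castSucc i : Fin (k+1)) : ℝ) = ∑ i : Fin k, (i : ℝ) by
      apply Finset.sum_congr rfl; intro i _; simp]
    rw [ih]; simp; ring

lemma sum_sq_real (n : ℕ) : ∑ i : Fin n, (i : ℝ)^2 = n * (n - 1) * (2*n - 1) / 6 := by
  induction n with
  | zero => simp
  | succ k ih =>
    rw [Fin.sum_univ_castSucc]
    push_cast
    push_cast at ih
    rw [show ∑ i : Fin k, ((Fin.castSucc i : Fin (k+1)) : ℝ)^2 = ∑ i : Fin k, (i : ℝ)^2 by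
      apply Finset.sum_congr rfl; intro i _; simp]
    rw [ih]; simp; ring

lemma infoJ_eq (M : ℕ) (hM : 2 ≤ M) (T σ σθ σβ σα : ℝ)
    (hθ : σθ ≠ 0) (hβ : σβ ≠ 0) (hα : σα ≠ 0) :
    infoJ M T σ σθ σβ σα =
      !![(σθ^2)⁻¹ + σ⁻¹^2 * M, σ⁻¹^2 * M, σ⁻¹^2 * (T * M / 2);
         σ⁻¹^2 * M, (σβ^2)⁻¹ + σ⁻¹^2 * M, σ⁻¹^2 * (T * M / 2);
         σ⁻¹^2 * (T * M / 2), σ⁻¹^2 * (T * M / 2),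
           (σα^2)⁻¹ + σ⁻¹^2 * (T^2 * M * (2*M - 1) / (6 * (M - 1)))] := by
  have hM1 : (M : ℝ) - 1 ≠ 0 := by
    have : (2:ℝ) ≤ M := by exact_mod_cast hM
    nlinarith
  have hdiag : (Matrix.diagonal ![σθ ^ 2, σβ ^ 2, σα ^ 2])⁻¹
      = Matrix.diagonal ![(σθ^2)⁻¹, (σβ^2)⁻¹, (σα^2)⁻¹] := by
    apply Matrix.inv_eq_right_inv
    ext i j
    fin_cases i <;> fin_cases j <;>
      simp [Matrix.mul_apply, Fin.sum_univ_succ] <;> field_simp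
  have hs1 : ∑ i : Fin M, (i : ℝ) * T / ((M:ℝ) - 1) = T * M / 2 := by
    rw [show (fun i : Fin M => (i : ℝ) * T / ((M:ℝ) - 1)) = fun i : Fin M => (i : ℝ) * (T / ((M:ℝ)-1)) by funext i; ring]
    rw [← Finset.sum_mul, sum_id_real]
    field_simp
  have hs2 : ∑ i : Fin M, ((i : ℝ) * T / ((M:ℝ) - 1)) * ((i : ℝ) * T / ((M:ℝ) - 1))
      = T^2 * M * (2*M - 1) / (6 * ((M:ℝ) - 1)) := by
    rw [show (fun i : Fin M => ((i : ℝ) * T / ((M:ℝ) - 1)) * ((i : ℝ) * T / ((M:ℝ) - 1)))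
        = fun i : Fin M => (i : ℝ)^2 * (T^2 / ((M:ℝ)-1)^2) by funext i; field_simp]
    rw [← Finset.sum_mul, sum_sq_real]
    field_simp
  unfold infoJ
  rw [hdiag]
  ext i j
  fin_cases i <;> fin_cases j <;>
    simp [Matrix.mul_apply, designC, Matrix.add_apply, Matrix.smul_apply, Fin.sum_univ_succ] <;>
    simp [hs1, hs2] <;> ring_nf

set_option maxHeartbeats 1600000 in
theorem stmt_3 (T σ σθ σβ σα : ℝ) (hT : 0 < T) (hσ : 0 < σ)
    (hθ : 0 < σθ) (hβ : 0 < σβ) (hα : 0 < σα) :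
    Tendsto (fun M : ℕ => ((infoJ M T σ σθ σβ σα)⁻¹ : Matrix (Fin 3) (Fin 3) ℝ) 2 2)
      atTop (nhds 0) := by
  set u : ℝ := (σθ^2)⁻¹ with hu_def
  set v : ℝ := (σβ^2)⁻¹ with hv_def
  set w : ℝ := (σα^2)⁻¹ with hw_def
  set s : ℝ := σ⁻¹^2 with hs_def
  have hu : 0 < u := by positivity
  have hv : 0 < v := by positivity
  have hw : 0 < w := by positivity
  have hs : 0 < s := by positivity
  set K : ℝ := 12 * (u*v + (u+v)*s) / ((u+v)*s^2*T^2) with hK_def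
  have key : ∀ M : ℕ, 2 ≤ M →
      0 ≤ ((infoJ M T σ σθ σβ σα)⁻¹ : Matrix (Fin 3) (Fin 3) ℝ) 2 2 ∧
      ((infoJ M T σ σθ σβ σα)⁻¹ : Matrix (Fin 3) (Fin 3) ℝ) 2 2 ≤ K / M := by
    intro M hM
    have hx2 : (2:ℝ) ≤ (M:ℝ) := by exact_mod_cast hM
    set x : ℝ := (M:ℝ) with hx_def
    have hx1 : 0 < x - 1 := by linarith
    have hx0 : 0 < x := by linarith
    rw [infoJ_eq M hM T σ σθ σβ σα (ne_of_gt hθ) (ne_of_gt hβ) (ne_of_gt hα)]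
    rw [Matrix.inv_def, Matrix.smul_apply, Ring.inverse_eq_inv, Matrix.adjugate_fin_three]
    rw [Matrix.det_fin_three]
    simp only [Matrix.of_apply, Matrix.cons_val', Matrix.cons_val_zero, Matrix.cons_val_one,
      Matrix.head_cons, Matrix.empty_val', Matrix.cons_val_fin_one, Matrix.head_fin_const,
      Matrix.cons_val_two, Matrix.tail_cons, smul_eq_mul]
    rw [← hu_def, ← hv_def, ← hw_def, ← hs_def, ← hx_def]
    set N : ℝ := u*v + (u+v)*s*x with hN_def
    set D : ℝ := w*N + s*T^2*x*(2*x-1)/(6*(x-1))*(u*v) + (u+v)*s^2*T^2*x^2*(x+1)/(12*(x-1))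
      with hD_def
    have hNpos : 0 < N := by positivity
    have hadj : ((u + s * x) * (v + s * x) - s * x * (s * x) : ℝ) = N := by
      rw [hN_def]; ring
    have hdet : ((u + s * x) * (v + s * x) * (w + s * (T ^ 2 * x * (2 * x - 1) / (6 * (x - 1)))) -
        (u + s * x) * (s * (T * x / 2)) * (s * (T * x / 2)) -
        s * x * (s * x) * (w + s * (T ^ 2 * x * (2 * x - 1) / (6 * (x - 1)))) +
        s * x * (s * (T * x / 2)) * (s * (T * x / 2)) +
        s * (T * x / 2) * (s * x) * (s * (T * x / 2)) -
        s * (T * x / 2) * (v + s * x) * (s * (T * x / 2)) : ℝ)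
        = D := by
      rw [hD_def, hN_def]
      field_simp
      ring
    rw [hadj, hdet]
    set c : ℝ := (u+v)*s^2*T^2/12 with hc_def
    have hcpos : 0 < c := by positivity
    clear_value N D c x
    have hDge : c * x^2 ≤ D := by
      have hsplit : D - c*x^2 = w*N + s*T^2*x*(2*x-1)/(6*(x-1))*(u*v)
          + (u+v)*s^2*T^2*x^2/(6*(x-1)) := by
        rw [hD_def, hc_def]
        field_simp
        ring
      have h1 : 0 ≤ w*N := by positivity
      have h2 : 0 ≤ s*T^2*x*(2*x-1)/(6*(x-1))*(u*v) := by
        have : 0 < 2*x - 1 := by linarith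
        positivity
      have h3 : 0 ≤ (u+v)*s^2*T^2*x^2/(6*(x-1)) := by positivity
      linarith [hsplit, h1, h2, h3]
    have hDpos : 0 < D := lt_of_lt_of_le (by positivity) hDge
    rw [inv_mul_eq_div]
    refine ⟨div_nonneg (le_of_lt hNpos) (le_of_lt hDpos), ?_⟩
    have hNle : N ≤ (u*v + (u+v)*s) * x := by
      have huv : 0 ≤ u*v*(x-1) := by positivity
      rw [hN_def]; nlinarith [huv]
    have h1 : N / D ≤ ((u*v + (u+v)*s) * x) / (c * x^2) :=
      div_le_div₀ (by positivity) hNle (by positivity) hDge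
    have h2 : ((u*v + (u+v)*s) * x) / (c * x^2) = K / x := by
      rw [hK_def, hc_def]
      field_simp
    rw [h2] at h1
    exact h1
  apply tendsto_of_tendsto_of_tendsto_of_le_of_le' (tendsto_const_nhds (x := (0:ℝ)))
    (tendsto_const_div_atTop_nhds_zero_nat K)
  · filter_upwards [eventually_ge_atTop 2] with M hM
    exact (key M hM).1
  · filter_upwards [eventually_ge_atTop 2] with M hM
    exact (key M hM).2
end

section
/- In the same two-node model, as M → ∞ the posterior covariance Σ = (Σ₀⁻¹ + σ⁻²CᵀC)⁻¹ converges entrywise to the matrix with upper-left 2×2 block (σ_θ²σ_β²/(σ_θ²+σ_β²))·[[1,−1],[−1,1]] and all entries of the third row and column equal to 0. -/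
open Matrix Filter

/-- Posterior covariance `Σ(M) = (Σ₀⁻¹ + σ⁻²CᵀC)⁻¹`. -/
noncomputable def postCov (M : ℕ) (T σ σθ σβ σα : ℝ) : Matrix (Fin 3) (Fin 3) ℝ :=
  ((Matrix.diagonal ![σθ ^ 2, σβ ^ 2, σα ^ 2])⁻¹ +
    σ⁻¹ ^ 2 • ((designC M T)ᵀ * designC M T))⁻¹

/-- Limit covariance: upper-left block `c·[[1,−1],[−1,1]]`, zero third row/column. -/
noncomputable def limCov (σθ σβ : ℝ) : Matrix (Fin 3) (Fin 3) ℝ :=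
  let c := σθ ^ 2 * σβ ^ 2 / (σθ ^ 2 + σβ ^ 2)
  ![![c, -c, 0], ![-c, c, 0], ![0, 0, 0]]

open Finset in
lemma sum_cast_id (n : ℕ) : ∑ i ∈ range n, (i:ℝ) = n*(n-1)/2 := by
  induction n with
  | zero => simp
  | succ k ih => rw [sum_range_succ, ih]; push_cast; ring

open Finset in
lemma sum_cast_sq (n : ℕ) : ∑ i ∈ range n, (i:ℝ)^2 = n*(n-1)*(2*n-1)/6 := by
  induction n with
  | zero => simp
  | succ k ih => rw [sum_range_succ, ih]; push_cast; ring

lemma fin_sum_id (M : ℕ) : ∑ i : Fin M, ((i:ℕ):ℝ) = M*(M-1)/2 := by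
  rw [Fin.sum_univ_eq_sum_range (fun i => ((i:ℕ):ℝ))]; exact sum_cast_id M

lemma fin_sum_sq (M : ℕ) : ∑ i : Fin M, ((i:ℕ):ℝ)^2 = M*(M-1)*(2*M-1)/6 := by
  rw [Fin.sum_univ_eq_sum_range (fun i => ((i:ℕ):ℝ)^2)]; exact sum_cast_sq M

lemma ctc (M : ℕ) (T : ℝ) (hM : 2 ≤ M) :
    (designC M T)ᵀ * designC M T =
      !![(M:ℝ), M, T*M/2; M, M, T*M/2;
         T*M/2, T*M/2, T^2*M*(2*M-1)/(6*((M:ℝ)-1))] := by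
  have hx : ((M:ℝ) - 1) ≠ 0 := by
    have : (2:ℝ) ≤ (M:ℝ) := by exact_mod_cast hM
    nlinarith
  ext i j
  fin_cases i <;> fin_cases j <;>
    simp [Matrix.mul_apply, designC, Fin.sum_univ_eq_sum_range, div_pow, mul_pow,
      div_mul_div_comm, mul_mul_mul_comm, ← sq, ← Finset.sum_div, ← Finset.sum_mul, ← Finset.mul_sum, fin_sum_id, fin_sum_sq,
      sum_cast_id, sum_cast_sq] <;>
    field_simp <;> ring

lemma prec (M : ℕ) (hM : 2 ≤ M) (T σ σθ σβ σα : ℝ)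
    (hθ : σθ ≠ 0) (hβ : σβ ≠ 0) (hα : σα ≠ 0) :
    (Matrix.diagonal ![σθ^2, σβ^2, σα^2])⁻¹ + σ⁻¹^2 • ((designC M T)ᵀ * designC M T) =
    !![(σθ^2)⁻¹ + σ⁻¹^2*M, σ⁻¹^2*M, σ⁻¹^2*(T*M/2);
       σ⁻¹^2*M, (σβ^2)⁻¹ + σ⁻¹^2*M, σ⁻¹^2*(T*M/2);
       σ⁻¹^2*(T*M/2), σ⁻¹^2*(T*M/2),
         (σα^2)⁻¹ + σ⁻¹^2*(T^2*M*(2*M-1)/(6*((M:ℝ)-1)))] := by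
  have h : Matrix.diagonal ![(σθ^2)⁻¹, (σβ^2)⁻¹, (σα^2)⁻¹] *
      Matrix.diagonal ![σθ^2, σβ^2, σα^2] = 1 := by
    rw [Matrix.diagonal_mul_diagonal]
    ext i j
    fin_cases i <;> fin_cases j <;>
      simp [Matrix.diagonal, inv_mul_cancel₀, pow_ne_zero, hθ, hβ, hα]
  rw [ctc M T hM, Matrix.inv_eq_left_inv h]
  ext i j
  fin_cases i <;> fin_cases j <;> simp [Matrix.diagonal]

noncomputable def Dp (a b c u T y : ℝ) : ℝ :=
  (6*c*y*(1-y) + u*T^2*(2-y)) * (a*b*y + u*(a+b)) - (3/2)*(1-y)*u^2*T^2*(a+b)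

noncomputable def Np (a b c u T : ℝ) : Fin 3 → Fin 3 → ℝ → ℝ :=
  ![![fun y => (b*y+u)*(6*c*y*(1-y)+u*T^2*(2-y)) - (3/2)*(1-y)*u^2*T^2,
     fun y => -(6*(1-y)*u*c*y + u^2*T^2*(2-y) - (3/2)*(1-y)*u^2*T^2),
     fun y => -(3*(1-y)*u*T*b*y)],
    ![fun y => -(6*(1-y)*u*c*y + u^2*T^2*(2-y) - (3/2)*(1-y)*u^2*T^2),
     fun y => (a*y+u)*(6*c*y*(1-y)+u*T^2*(2-y)) - (3/2)*(1-y)*u^2*T^2,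
     fun y => -(3*(1-y)*a*u*T*y)],
    ![fun y => -(3*(1-y)*u*T*b*y),
     fun y => -(3*(1-y)*a*u*T*y),
     fun y => 6*(1-y)*(a*b*y^2 + u*(a+b)*y)]]

set_option maxHeartbeats 4000000 in
set_option linter.unnecessarySeqFocus false in
lemma abstract_inv (a b c u T x : ℝ) (hx0 : x ≠ 0) (hx1 : x - 1 ≠ 0) (i j : Fin 3) :
    (!![a + u*x, u*x, u*(T*x/2);
        u*x, b + u*x, u*(T*x/2);
        u*(T*x/2), u*(T*x/2), c + u*(T^2*x*(2*x-1)/(6*(x-1)))])⁻¹ i j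
      = Np a b c u T i j (1/x) / Dp a b c u T (1/x) := by
  have hy1 : (1:ℝ) - 1/x = (x-1)/x := by field_simp
  have ht : ((1/x)^2 * (6*(1-1/x))) ≠ 0 := by
    rw [hy1]
    exact mul_ne_zero (by positivity) (mul_ne_zero (by norm_num) (div_ne_zero hx1 hx0))
  have hdet : ((a + u*x) * (b + u*x) * (c + u*(T^2*x*(2*x-1)/(6*(x-1))))
      - (a + u*x) * (u*(T*x/2)) * (u*(T*x/2))
      - u*x * (u*x) * (c + u*(T^2*x*(2*x-1)/(6*(x-1))))
      + u*x * (u*(T*x/2)) * (u*(T*x/2))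
      + u*(T*x/2) * (u*x) * (u*(T*x/2))
      - u*(T*x/2) * (b + u*x) * (u*(T*x/2))) * ((1/x)^2*(6*(1-1/x)))
      = Dp a b c u T (1/x) := by
    rw [Dp]; field_simp; ring
  rw [Matrix.inv_def, Ring.inverse_eq_inv', Matrix.det_fin_three, Matrix.adjugate_fin_three]
  fin_cases i <;> fin_cases j <;>
    (simp only [Np, Matrix.of_apply, Matrix.smul_apply, smul_eq_mul, Matrix.cons_val', Matrix.cons_val_zero,
      Matrix.cons_val_one, Matrix.head_cons, Matrix.empty_val', Matrix.cons_val_fin_one,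
      Matrix.cons_val_two, Matrix.tail_cons, Matrix.head_fin_const, Fin.isValue, Fin.mk_zero,
      Fin.mk_one, Fin.zero_eta, Fin.reduceFinMk]
     rw [inv_mul_eq_div, ← mul_div_mul_right _ _ ht]
     congr 1 <;> first
       | exact hdet
       | (field_simp; ring))

lemma postCov_eq (T σ σθ σβ σα : ℝ)
    (hθ : σθ ≠ 0) (hβ : σβ ≠ 0) (hα : σα ≠ 0) (M : ℕ) (hM : 2 ≤ M) (i j : Fin 3) :
    postCov M T σ σθ σβ σα i j =
      Np (σθ^2)⁻¹ (σβ^2)⁻¹ (σα^2)⁻¹ (σ⁻¹^2) T i j (1/(M:ℝ)) /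
        Dp (σθ^2)⁻¹ (σβ^2)⁻¹ (σα^2)⁻¹ (σ⁻¹^2) T (1/(M:ℝ)) := by
  have hM2 : (2:ℝ) ≤ (M:ℝ) := by exact_mod_cast hM
  have hx0 : (M:ℝ) ≠ 0 := by nlinarith
  have hx1 : ((M:ℝ)-1) ≠ 0 := by nlinarith
  rw [postCov, prec M hM T σ σθ σβ σα hθ hβ hα]
  exact abstract_inv ((σθ^2)⁻¹) ((σβ^2)⁻¹) ((σα^2)⁻¹) (σ⁻¹^2) T (M:ℝ) hx0 hx1 i j

lemma tendsto_aux (a b c u T : ℝ) (i j : Fin 3) (f : ℕ → ℝ) (L : ℝ)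
    (hf : ∀ M : ℕ, 2 ≤ M → f M = Np a b c u T i j (1/(M:ℝ)) / Dp a b c u T (1/(M:ℝ)))
    (hD : Dp a b c u T 0 ≠ 0) (hL : Np a b c u T i j 0 / Dp a b c u T 0 = L) :
    Filter.Tendsto f atTop (nhds L) := by
  have hN : Continuous (Np a b c u T i j) := by
    fin_cases i <;> fin_cases j <;>
      (simp only [Np, Matrix.cons_val', Matrix.cons_val_zero, Matrix.cons_val_one,
        Matrix.head_cons, Matrix.empty_val', Matrix.cons_val_fin_one, Matrix.cons_val_two,
        Matrix.tail_cons, Matrix.head_fin_const, Fin.isValue, Fin.mk_zero, Fin.mk_one,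
        Fin.zero_eta, Fin.reduceFinMk]
       fun_prop)
  have hDc : Continuous (Dp a b c u T) := by unfold Dp; fun_prop
  have h1 : Filter.Tendsto (fun M : ℕ => (1:ℝ)/M) atTop (nhds 0) :=
    tendsto_one_div_atTop_nhds_zero_nat
  have h2 : Filter.Tendsto
      (fun M : ℕ => Np a b c u T i j (1/(M:ℝ)) / Dp a b c u T (1/(M:ℝ))) atTop (nhds L) := by
    rw [← hL]
    exact (hN.continuousAt.div hDc.continuousAt hD).tendsto.comp h1
  exact h2.congr' (by
    filter_upwards [eventually_ge_atTop 2] with M hM using (hf M hM).symm)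

set_option maxHeartbeats 1000000 in
theorem stmt_4 (T σ σθ σβ σα : ℝ) (hT : 0 < T) (hσ : 0 < σ)
    (hθ : 0 < σθ) (hβ : 0 < σβ) (hα : 0 < σα) :
    ∀ i j : Fin 3,
      Tendsto (fun M : ℕ => postCov M T σ σθ σβ σα i j)
        atTop (nhds (limCov σθ σβ i j)) := by
  intro i j
  have hD : Dp (σθ^2)⁻¹ (σβ^2)⁻¹ (σα^2)⁻¹ (σ⁻¹^2) T 0 ≠ 0 := by
    have h : Dp (σθ^2)⁻¹ (σβ^2)⁻¹ (σα^2)⁻¹ (σ⁻¹^2) T 0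
        = (σ⁻¹^2)^2*T^2*((σθ^2)⁻¹+(σβ^2)⁻¹)/2 := by rw [Dp]; ring
    rw [h]; positivity
  refine tendsto_aux _ _ _ _ _ i j _ _
    (fun M hM => postCov_eq T σ σθ σβ σα hθ.ne' hβ.ne' hα.ne' M hM i j) hD ?_
  fin_cases i <;> fin_cases j <;>
    (simp only [Np, Dp, limCov, Matrix.cons_val', Matrix.cons_val_zero, Matrix.cons_val_one,
      Matrix.head_cons, Matrix.empty_val', Matrix.cons_val_fin_one, Matrix.cons_val_two,
      Matrix.tail_cons, Matrix.head_fin_const, Fin.isValue, Fin.mk_zero, Fin.mk_one,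
      Fin.zero_eta, Fin.reduceFinMk]
     try field_simp
     try ring
     try (field_simp [show (T^2*σ^12*σθ^2*σβ^4*2 + T^2*σ^12*σθ^4*σβ^2*2) ≠ 0 by positivity,
            show (σ^12*T^2*σθ^2*σβ^4*2 + σ^12*T^2*σθ^4*σβ^2*2) ≠ 0 by positivity]
          ring))
end
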